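/- arXiv:2511.04147 — 2 statements merged into one kernel-verified Lean document; each statement's English description precedes it below -/
import Mathlib

section
/- Suppose θ_{k+1} satisfies the KKT conditions for the problem with constraint set Ē_{k+1} = E_k ∪ {y_{k+1}}: stationarity −∇J(θ_{k+1}) + Σ_{y∈Ē_{k+1}} v_{k+1}(y)∇g_y(θ_{k+1}) = 0, and the multipliers vanish except on E_{k+1} = {y ∈ Ē_{k+1} : v_{k+1}(y) > 0}, where g_y(θ_{k+1}) = d_y for y ∈ E_{k+1}. Assume also g_y(θ_k) = d_y for all y ∈ E_k. Let d = θ_{k+1} − θ_k, G_k = −J(θ_k) + J(θ_{k+1}) − ∇J(θ_{k+1})ᵀd, and T_k(y) = g_y(θ_k) − g_y(θ_{k+1}) + ∇g_y(θ_{k+1})ᵀd. Then J(θ_k) − J(θ_{k+1}) = −G_k − Σ_{y∈E_{k+1}} v_{k+1}(y) T_k(y) + v_{k+1}(y_{k+1})(g_{y_{k+1}}(θ_k) − d_{y_{k+1}}). -/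
/-- Second identity of Lemma 2: the incremental change of the objective value in terms of
the Taylor remainders `G_k`, `T_k(y)` at the next iterate and the violation at `y_{k+1}`. -/
theorem stmt_4 {p : ℕ} {Y : Type*} [DecidableEq Y]
    (J : EuclideanSpace ℝ (Fin p) → ℝ)
    (g : Y → EuclideanSpace ℝ (Fin p) → ℝ) (dth : Y → ℝ)
    (hJ : Differentiable ℝ J) (hg : ∀ y, Differentiable ℝ (g y))
    (Ek Ebar Ek1 : Finset Y) (yk1 : Y) (hnew : yk1 ∉ Ek)
    (hEbar : Ebar = insert yk1 Ek)
    (θk θk1 : EuclideanSpace ℝ (Fin p)) (vk1 : Y → ℝ)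
    (hdual : ∀ y ∈ Ebar, 0 ≤ vk1 y)
    (hEk1 : ∀ y, y ∈ Ek1 ↔ y ∈ Ebar ∧ 0 < vk1 y)
    (hact : ∀ y ∈ Ek1, g y θk1 = dth y)
    (hactk : ∀ y ∈ Ek, g y θk = dth y)
    (hstat : -fderiv ℝ J θk1 + ∑ y ∈ Ebar, vk1 y • fderiv ℝ (g y) θk1 = 0) :
    J θk - J θk1 =
      -(-J θk + J θk1 - fderiv ℝ J θk1 (θk1 - θk)) -
      (∑ y ∈ Ek1, vk1 y * (g y θk - g y θk1 + fderiv ℝ (g y) θk1 (θk1 - θk))) +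
      vk1 yk1 * (g yk1 θk - dth yk1) := by
  -- zero multipliers outside Ek1
  have hzero : ∀ y ∈ Ebar, y ∉ Ek1 → vk1 y = 0 := by
    intro y hy hyn
    have h1 := hdual y hy
    have h2 : ¬ 0 < vk1 y := fun h => hyn ((hEk1 y).2 ⟨hy, h⟩)
    linarith [lt_or_eq_of_le h1]
  have hsub : Ek1 ⊆ Ebar := fun y hy => ((hEk1 y).1 hy).1
  -- stationarity applied to the direction
  have hD : fderiv ℝ J θk1 (θk1 - θk)
      = ∑ y ∈ Ek1, vk1 y * fderiv ℝ (g y) θk1 (θk1 - θk) := by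
    have h := congrArg (fun L : EuclideanSpace ℝ (Fin p) →L[ℝ] ℝ => L (θk1 - θk)) hstat
    simp only [ContinuousLinearMap.add_apply, ContinuousLinearMap.neg_apply,
      ContinuousLinearMap.sum_apply, ContinuousLinearMap.smul_apply,
      ContinuousLinearMap.zero_apply, smul_eq_mul] at h
    have h' : fderiv ℝ J θk1 (θk1 - θk)
        = ∑ y ∈ Ebar, vk1 y * fderiv ℝ (g y) θk1 (θk1 - θk) := by linarith
    rw [h']
    exact (Finset.sum_subset hsub (by
      intro y hy hyn
      rw [hzero y hy hyn, zero_mul])).symm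
  -- the key cancellation
  have hkey : ∑ y ∈ Ek1, vk1 y * (g y θk - g y θk1)
      = vk1 yk1 * (g yk1 θk - dth yk1) := by
    by_cases hmem : yk1 ∈ Ek1
    · rw [← Finset.add_sum_erase _ _ hmem, hact yk1 hmem]
      have : ∑ y ∈ Ek1.erase yk1, vk1 y * (g y θk - g y θk1) = 0 := by
        apply Finset.sum_eq_zero
        intro y hy
        have hne : y ≠ yk1 := Finset.ne_of_mem_erase hy
        have hyE : y ∈ Ek1 := Finset.mem_of_mem_erase hy
        have hyEk : y ∈ Ek := by
          have := hsub hyE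
          rw [hEbar] at this
          rcases Finset.mem_insert.1 this with h | h
          · exact absurd h hne
          · exact h
        rw [hact y hyE, hactk y hyEk, sub_self, mul_zero]
      rw [this, add_zero]
    · have hv : vk1 yk1 = 0 := by
        apply hzero yk1 _ hmem
        rw [hEbar]; exact Finset.mem_insert_self _ _
      rw [hv, zero_mul]
      apply Finset.sum_eq_zero
      intro y hy
      have hne : y ≠ yk1 := fun h => hmem (h ▸ hy)
      have hyEk : y ∈ Ek := by
        have := hsub hy
        rw [hEbar] at this
        rcases Finset.mem_insert.1 this with h | h
        · exact absurd h hne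
        · exact h
      rw [hact y hy, hactk y hyEk, sub_self, mul_zero]
  have hexp : ∑ y ∈ Ek1, vk1 y * (g y θk - g y θk1 + fderiv ℝ (g y) θk1 (θk1 - θk))
      = (∑ y ∈ Ek1, vk1 y * (g y θk - g y θk1))
        + ∑ y ∈ Ek1, vk1 y * fderiv ℝ (g y) θk1 (θk1 - θk) := by
    rw [← Finset.sum_add_distrib]
    exact Finset.sum_congr rfl fun y _ => by ring
  rw [hexp, hkey, ← hD]
  ring
end

section
/- Under the hypotheses of the previous statement (θ_k the unique maximizer of J over F(E_k), θ_{k+1} the unique maximizer over F(Ē_{k+1}) with Ē_{k+1} = E_k ∪ {y_{k+1}}, g_{y_{k+1}}(θ_k) > d_{y_{k+1}} + η for η > 0), and additionally defining E_{k+1} = {y ∈ Ē_{k+1} : v_{k+1}(y) > 0} from KKT multipliers of θ_{k+1}, and assuming θ_{k+1} is the unique maximizer over F(E_{k+1}): if E_{k+1} ⊆ E_k then a contradiction follows; hence y_{k+1} ∈ E_{k+1}, i.e., v_{k+1}(y_{k+1}) > 0. -/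
/-- Lemma 3, second part: under the hypotheses of the strict-decrease lemma, with
`E_{k+1} = {y ∈ Ē_{k+1} : v_{k+1}(y) > 0}` obtained from the KKT multipliers of `θ_{k+1}`
and `θ_{k+1}` the unique maximizer over `F(E_{k+1})`, the new point `y_{k+1}` belongs to
`E_{k+1}`, i.e. `v_{k+1}(y_{k+1}) > 0`. -/
theorem stmt_6 {p : ℕ} {Y : Type*} (J : EuclideanSpace ℝ (Fin p) → ℝ)
    (g : Y → EuclideanSpace ℝ (Fin p) → ℝ) (d : Y → ℝ)
    (F : Set Y → Set (EuclideanSpace ℝ (Fin p)))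
    (hF : ∀ S, F S = {θ | ∀ y ∈ S, g y θ ≤ d y})
    (Ek Ek1 : Set Y) (yk1 : Y) (η : ℝ) (hη : 0 < η)
    (θk θk1 : EuclideanSpace ℝ (Fin p)) (vk1 : Y → ℝ)
    (hθk : θk ∈ F Ek) (hθkmax : ∀ θ ∈ F Ek, J θ ≤ J θk)
    (hθkuniq : ∀ θ ∈ F Ek, J θ = J θk → θ = θk)
    (hθk1 : θk1 ∈ F (Ek ∪ {yk1})) (hθk1max : ∀ θ ∈ F (Ek ∪ {yk1}), J θ ≤ J θk1)
    (hθk1uniq : ∀ θ ∈ F (Ek ∪ {yk1}), J θ = J θk1 → θ = θk1)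
    (hviol : g yk1 θk > d yk1 + η)
    (hEk1 : Ek1 = {y ∈ Ek ∪ {yk1} | 0 < vk1 y})
    (hθk1' : θk1 ∈ F Ek1) (hθk1max' : ∀ θ ∈ F Ek1, J θ ≤ J θk1)
    (hθk1uniq' : ∀ θ ∈ F Ek1, J θ = J θk1 → θ = θk1) :
    yk1 ∈ Ek1 := by
  by_contra hnot
  -- Then Ek1 ⊆ Ek
  have hsub : Ek1 ⊆ Ek := by
    intro y hy
    rw [hEk1] at hy
    rcases hy.1 with h | h
    · exact h
    · subst h; rw [hEk1] at hnot; exact absurd hy hnot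
  -- θk ∈ F Ek1
  have hθkF : θk ∈ F Ek1 := by
    rw [hF] at hθk ⊢
    exact fun y hy => hθk y (hsub hy)
  have h1 : J θk ≤ J θk1 := hθk1max' θk hθkF
  have hθk1F : θk1 ∈ F Ek := by
    rw [hF] at hθk1 ⊢
    exact fun y hy => hθk1 y (Or.inl hy)
  have h2 : J θk1 ≤ J θk := hθkmax θk1 hθk1F
  have heq : θk1 = θk := hθkuniq θk1 hθk1F (le_antisymm h2 h1)
  rw [hF] at hθk1
  have := hθk1 yk1 (Or.inr rfl)
  rw [heq] at this
  linarith
end
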